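/- For every x ∈ 𝔤 and every w ∈ W, the commutator of operators [f_x, M_w] equals M_{x·w}, where for w = Σ_α c_α e_α ∈ W, M_w denotes the operator of multiplication by the linear polynomial Σ_α c_α X_α. -/

import Mathlib

open scoped Classical

/-- Multiplication by the variable `X γ` on the bosonic Fock space `K[X_α : α ∈ I]`. -/
noncomputable def Mop (K : Type*) [CommSemiring K] {I : Type*} (γ : I) :
    Module.End K (MvPolynomial I K) :=
  LinearMap.mulLeft K (MvPolynomial.X γ)

/-- The partial derivative `∂/∂X_α` on the bosonic Fock space `K[X_α : α ∈ I]`. -/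
noncomputable def Dop (K : Type*) [CommSemiring K] {I : Type*} (α : I) :
    Module.End K (MvPolynomial I K) :=
  (MvPolynomial.pderiv α).toLinearMap

/-- The normally ordered quadratic piece `N(γ,α)`. -/
noncomputable def Nop (K : Type*) [CommSemiring K] {I : Type*} (J : Set I) (γ α : I) :
    Module.End K (MvPolynomial I K) :=
  if γ = α ∧ α ∈ J then Dop K α ∘ₗ Mop K α else Mop K γ ∘ₗ Dop K α

/-- The normally ordered quadratic operator
`f_x = Σ_{α,γ∈I} x_γ^α N(γ,α)` on bosonic Fock space, where
`x_γ^α = (b.repr ⁅x, b α⁆) γ` are the matrix coefficients of `x` on `W`. -/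
noncomputable def fock {K : Type*} [Field K] {L : Type*} [LieRing L] [LieAlgebra K L]
    {W : Type*} [AddCommGroup W] [Module K W] [LieRingModule L W] [LieModule K L W]
    {I : Type*} [Fintype I] (b : Module.Basis I K W) (J : Set I) (x : L) :
    Module.End K (MvPolynomial I K) :=
  ∑ α : I, ∑ γ : I, b.repr ⁅x, b α⁆ γ • Nop K J γ α

lemma lieDM (K : Type*) [CommRing K] {I : Type*} (α δ : I) :
    ⁅Dop K α, Mop K δ⁆ = if α = δ then (1 : Module.End K (MvPolynomial I K)) else 0 := by
  ext p
  simp only [Ring.lie_def, LinearMap.sub_apply, Module.End.mul_apply, Dop, Mop,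
    LinearMap.mulLeft_apply, Derivation.coeFn_coe, MvPolynomial.pderiv_mul,
    MvPolynomial.pderiv_X]
  split <;> simp [Pi.single_apply, *]

lemma lieMM (K : Type*) [CommRing K] {I : Type*} (γ δ : I) :
    Mop K γ * Mop K δ = Mop K δ * Mop K γ := by
  apply LinearMap.ext; intro p
  simp only [Module.End.mul_apply, Mop, LinearMap.mulLeft_apply]
  ring

lemma lieNM (K : Type*) [CommRing K] {I : Type*} (J : Set I) (γ α δ : I) :
    ⁅Nop K J γ α, Mop K δ⁆ = if α = δ then Mop K γ else 0 := by
  have hmain : ∀ γ' : I, ⁅Mop K γ' * Dop K α, Mop K δ⁆ = if α = δ then Mop K γ' else 0 := by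
    intro γ'
    rw [Ring.lie_def]
    have h : Mop K δ * (Mop K γ' * Dop K α) = Mop K γ' * (Mop K δ * Dop K α) := by
      rw [← mul_assoc, ← mul_assoc, lieMM K δ γ']
    rw [h, mul_assoc, ← mul_sub, ← Ring.lie_def, lieDM]
    split <;> simp
  rcases Classical.em (γ = α ∧ α ∈ J) with ⟨rfl, hJ⟩ | h
  · rw [Nop, if_pos ⟨rfl, hJ⟩]
    have hD : Dop K γ ∘ₗ Mop K γ = Mop K γ * Dop K γ + 1 := by
      have h2 := lieDM K γ γ
      rw [Ring.lie_def, if_pos rfl] at h2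
      rw [← Module.End.mul_eq_comp, ← sub_eq_iff_eq_add'.mp h2]
    rw [hD, Ring.lie_def, add_mul, mul_add, add_sub_add_comm, ← Ring.lie_def, ← Ring.lie_def, hmain]
    have : ⁅(1 : Module.End K (MvPolynomial I K)), Mop K δ⁆ = 0 := by
      rw [Ring.lie_def]; simp
    rw [this, add_zero]
  · rw [Nop, if_neg h, ← Module.End.mul_eq_comp, hmain]


lemma sum_lie' {L M : Type*} [LieRing L] [AddCommGroup M] [LieRingModule L M]
    {ι : Type*} (s : Finset ι) (f : ι → L) (y : M) :
    ⁅∑ i ∈ s, f i, y⁆ = ∑ i ∈ s, ⁅f i, y⁆ := by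
  induction s using Finset.induction_on with
  | empty => simp
  | insert _ _ h ih => simp [Finset.sum_insert h, add_lie, ih]

lemma lie_sum' {L M : Type*} [LieRing L] [AddCommGroup M] [LieRingModule L M]
    {ι : Type*} (s : Finset ι) (x : L) (f : ι → M) :
    ⁅x, ∑ i ∈ s, f i⁆ = ∑ i ∈ s, ⁅x, f i⁆ := by
  induction s using Finset.induction_on with
  | empty => simp
  | insert _ _ h ih => simp [Finset.sum_insert h, lie_add, ih]

lemma mulLeft_sum (K : Type*) [Field K] {I : Type*} [Fintype I] (c : I → K) :
    LinearMap.mulLeft K (∑ α : I, c α • MvPolynomial.X α : MvPolynomial I K)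
      = ∑ δ : I, c δ • Mop K δ := by
  apply LinearMap.ext; intro p
  simp [Mop, Finset.sum_mul, smul_mul_assoc]


set_option maxHeartbeats 1000000 in
/-- for every `x ∈ 𝔤` and `w ∈ W`, the commutator of operators
`[f_x, M_w]` equals `M_{x·w}`, where `M_w` is multiplication by the linear
polynomial `Σ_α c_α X_α` for `w = Σ_α c_α e_α`. -/
theorem stmt3 (K : Type*) [Field K] [CharZero K]
    (L : Type*) [LieRing L] [LieAlgebra K L]
    (W : Type*) [AddCommGroup W] [Module K W] [LieRingModule L W] [LieModule K L W]
    (I : Type*) [Fintype I] (b : Module.Basis I K W) (J : Set I)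
    (x : L) (w : W) :
    ⁅fock b J x, LinearMap.mulLeft K (∑ α : I, b.repr w α • MvPolynomial.X α : MvPolynomial I K)⁆
      = LinearMap.mulLeft K (∑ α : I, b.repr ⁅x, w⁆ α • MvPolynomial.X α : MvPolynomial I K) := by
  classical
  rw [mulLeft_sum, mulLeft_sum, fock]
  have hx : (⁅x, w⁆ : W) = ∑ α : I, b.repr w α • ⁅x, b α⁆ := by
    conv_lhs => rw [← b.sum_repr w]
    rw [lie_sum']
    simp [lie_smul]
  have hrepr : ∀ γ : I, b.repr ⁅x, w⁆ γ = ∑ α : I, b.repr w α * b.repr ⁅x, b α⁆ γ := by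
    intro γ
    rw [hx, map_sum]
    simp [Finsupp.smul_apply]
  have hsl : ∀ (s : Finset I) (f : I → Module.End K (MvPolynomial I K)) (y : Module.End K (MvPolynomial I K)),
      ⁅∑ i ∈ s, f i, y⁆ = ∑ i ∈ s, ⁅f i, y⁆ := by
    intro s f y
    simp only [Ring.lie_def, Finset.sum_mul, Finset.mul_sum, Finset.sum_sub_distrib]
  have hls : ∀ (s : Finset I) (y : Module.End K (MvPolynomial I K)) (f : I → Module.End K (MvPolynomial I K)),
      ⁅y, ∑ i ∈ s, f i⁆ = ∑ i ∈ s, ⁅y, f i⁆ := by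
    intro s y f
    simp only [Ring.lie_def, Finset.sum_mul, Finset.mul_sum, Finset.sum_sub_distrib]
  simp only [hsl, hls]
  have step : ∀ (t s : K) (A B : Module.End K (MvPolynomial I K)),
      ⁅t • A, s • B⁆ = (t * s) • ⁅A, B⁆ := by
    intro t s A B
    simp only [Ring.lie_def, smul_mul_assoc, mul_smul_comm, smul_smul, smul_sub, mul_comm s t]
  simp only [step, lieNM, smul_ite, smul_zero, Finset.sum_ite_eq, Finset.mem_univ, if_true]
  have h1 : ∀ δ : I, (∑ α : I, ∑ γ : I,
        if α = δ then ((b.repr ⁅x, b α⁆) γ * (b.repr w) δ) • Mop K γ else 0)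
      = ∑ γ : I, ((b.repr ⁅x, b δ⁆) γ * (b.repr w) δ) • Mop K γ := by
    intro δ
    rw [Finset.sum_comm]
    refine Finset.sum_congr rfl fun γ _ => ?_
    simp
  rw [Finset.sum_comm]
  refine Finset.sum_congr rfl fun γ _ => ?_
  rw [hrepr, Finset.sum_smul]
  refine Finset.sum_congr rfl fun α _ => ?_
  rw [mul_comm]
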